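/- Fix a bound β ≥ 1 and let θ be of bounded type with all partial quotients at most β, with l_n := |p_n - q_n θ|. Let v ∈ ℝ/ℤ, let J be an arc of length λ·l_n (for λ ≥ 1), and let O := { y ∈ J : y = v - iθ (mod 1) for some 0 ≤ i ≤ q_{n+m} - 1 }. Then |O| ≤ λ C^m + 1 for a constant C > 1 depending only on β; in particular |O| = O(λ C^m). -/

import Mathlib

/-- Data of the continued fraction expansion `θ = [0; a 1, a 2, ...]` of an irrational
`θ ∈ (0,1)` (encoded via the Gauss map iterates `t n`), together with the convergents
`p n / q n` produced by the standard recursion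
`p n = a n * p (n-1) + p (n-2)`, `q n = a n * q (n-1) + q (n-2)`,
with `p 0 = 0`, `q 0 = 1`, and (`p (-1) = 1`, `q (-1) = 0`, folded into the values at `1`). -/
structure CFData (θ : ℝ) : Type where
  /-- the partial quotients `a 1, a 2, ...` (the value `a 0` is unused) -/
  a : ℕ → ℕ
  /-- the Gauss map iterates: `t 0 = θ`, `t (n+1) = (t n)⁻¹ - a (n+1)` -/
  t : ℕ → ℝ
  t_zero : t 0 = θ
  t_mem : ∀ n, t n ∈ Set.Ioo (0 : ℝ) 1
  a_floor : ∀ n, (a (n + 1) : ℤ) = ⌊(t n)⁻¹⌋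
  t_succ : ∀ n, t (n + 1) = (t n)⁻¹ - (a (n + 1) : ℝ)
  /-- numerators of the convergents -/
  p : ℕ → ℕ
  /-- denominators of the convergents -/
  q : ℕ → ℕ
  p_zero : p 0 = 0
  p_one : p 1 = 1
  q_zero : q 0 = 1
  q_one : q 1 = a 1
  p_rec : ∀ n, p (n + 2) = a (n + 2) * p (n + 1) + p n
  q_rec : ∀ n, q (n + 2) = a (n + 2) * q (n + 1) + q n

/-- `l n = |p n - q n · θ|`. -/
noncomputable def CFData.l {θ : ℝ} (cf : CFData θ) (n : ℕ) : ℝ :=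
  |(cf.p n : ℝ) - (cf.q n : ℝ) * θ|


lemma abs_le_abs_add_of_mul_nonneg (A B : ℝ) (h : 0 ≤ A * B) : |A| ≤ |A + B| := by
  rcases le_or_gt 0 A with hA|hA
  · rcases le_or_gt 0 B with hB|hB
    · rw [abs_of_nonneg hA, abs_of_nonneg (add_nonneg hA hB)]; linarith
    · have hA0 : A = 0 := by nlinarith
      simp [hA0]
  · rcases le_or_gt 0 B with hB|hB
    · have h0 : A * B = 0 := le_antisymm (by nlinarith) h
      have hB0 : B = 0 := by
        rcases mul_eq_zero.1 h0 with h'|h'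
        · exact absurd h' hA.ne
        · exact h'
      simp [hB0]
    · rw [abs_of_neg hA, abs_of_neg (by linarith : A + B < 0)]; linarith

namespace CFData
variable {θ : ℝ} (cf : CFData θ)

lemma t_pos (n : ℕ) : 0 < cf.t n := (cf.t_mem n).1
lemma t_lt_one (n : ℕ) : cf.t n < 1 := (cf.t_mem n).2

lemma a_pos' (n : ℕ) : 1 ≤ cf.a (n+1) := by
  have h := cf.a_floor n
  have h1 : (1:ℝ) ≤ (cf.t n)⁻¹ := (one_lt_inv_iff₀.2 ⟨t_pos cf n, t_lt_one cf n⟩).le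
  have h2 : (1:ℤ) ≤ ⌊(cf.t n)⁻¹⌋ := by exact_mod_cast Int.le_floor.2 (by exact_mod_cast h1)
  rw [← h] at h2; exact_mod_cast h2

lemma delta_eq (n : ℕ) :
    (cf.p n : ℝ) - (cf.q n : ℝ) * θ = (-1)^(n+1) * ∏ k ∈ Finset.range (n+1), cf.t k := by
  induction n using Nat.twoStepInduction with
  | zero => simp [cf.p_zero, cf.q_zero, cf.t_zero]
  | one =>
    have ht := cf.t_succ 0
    have h0 : cf.t 0 = θ := cf.t_zero
    have hθ : θ ≠ 0 := by rw [← h0]; exact (t_pos cf 0).ne'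
    simp only [cf.p_one, cf.q_one]
    rw [Finset.prod_range_succ, Finset.prod_range_one, h0, ht, h0]
    field_simp
    ring
  | more n ih1 ih2 =>
    have ht := cf.t_succ (n+1)
    have htne : cf.t (n+1) ≠ 0 := (t_pos cf (n+1)).ne'
    have key : cf.t (n+1) * cf.t (n+2) = 1 - (cf.a (n+2) : ℝ) * cf.t (n+1) := by
      rw [ht]; field_simp
    rw [cf.p_rec n, cf.q_rec n]
    push_cast
    rw [show ((cf.a (n+2) : ℝ)) * (cf.p (n+1)) + cf.p n - ((cf.a (n+2) : ℝ) * cf.q (n+1) + cf.q n) * θ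
        = (cf.a (n+2) : ℝ) * ((cf.p (n+1) : ℝ) - cf.q (n+1) * θ) + ((cf.p n : ℝ) - cf.q n * θ) from by ring,
      ih2, ih1, Finset.prod_range_succ (n := n+2), Finset.prod_range_succ (n := n+1)]
    set A := ∏ k ∈ Finset.range (n+1), cf.t k with hA
    linear_combination (-1:ℝ)^n * A * key

lemma l_eq (n : ℕ) : cf.l n = ∏ k ∈ Finset.range (n+1), cf.t k := by
  rw [CFData.l, delta_eq cf n, abs_mul, abs_pow, abs_neg, abs_one, one_pow, one_mul,
    abs_of_pos (Finset.prod_pos fun k _ => t_pos cf k)]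

lemma l_pos (n : ℕ) : 0 < cf.l n := by
  rw [l_eq]; exact Finset.prod_pos fun k _ => t_pos cf k

lemma l_succ (n : ℕ) : cf.l (n+1) = cf.l n * cf.t (n+1) := by
  rw [l_eq, l_eq, Finset.prod_range_succ]

lemma l_anti (n : ℕ) : cf.l (n+1) ≤ cf.l n := by
  rw [l_succ]
  nlinarith [l_pos cf n, t_pos cf (n+1), t_lt_one cf (n+1)]

lemma l_anti' {a b : ℕ} (h : a ≤ b) : cf.l b ≤ cf.l a := by
  induction b with
  | zero => simp_all
  | succ b ih =>
    rcases Nat.lt_or_ge a (b+1) with h'|h'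
    · exact (l_anti cf b).trans (ih (by omega))
    · have : a = b + 1 := by omega
      simp [this]

lemma qtheta_sub (n : ℕ) : (cf.q n : ℝ) * θ - cf.p n = (-1)^n * cf.l n := by
  rw [l_eq]
  have h := delta_eq cf n
  rw [pow_succ] at h
  linear_combination -h

lemma det (n : ℕ) : (cf.p (n+1) : ℤ) * cf.q n - (cf.p n : ℤ) * cf.q (n+1) = (-1)^n := by
  induction n with
  | zero => simp [cf.p_zero, cf.p_one, cf.q_zero]
  | succ n ih =>
    rw [cf.p_rec n, cf.q_rec n]
    push_cast
    rw [pow_succ]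
    push_cast at ih
    linear_combination (-1 : ℤ) * ih

lemma q_pos (n : ℕ) : 1 ≤ cf.q n := by
  induction n using Nat.twoStepInduction with
  | zero => simp [cf.q_zero]
  | one => rw [cf.q_one]; exact a_pos' cf 0
  | more n ih1 ih2 => rw [cf.q_rec n]; omega

lemma q_mono (n : ℕ) : cf.q n ≤ cf.q (n+1) := by
  induction n using Nat.twoStepInduction with
  | zero => rw [cf.q_zero, cf.q_one]; exact a_pos' cf 0
  | one =>
    rw [cf.q_rec 0]
    have := a_pos' cf 1
    have := cf.q_zero
    nlinarith [Nat.one_le_iff_ne_zero.1 (q_pos cf 1)]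
  | more n ih1 ih2 =>
    rw [cf.q_rec (n+1)]
    have := a_pos' cf (n+2)
    nlinarith [q_pos cf (n+2)]

/-- Best approximation: for `1 ≤ k < q (N+1)` and any integer `z`, `|kθ - z| ≥ l N`. -/
lemma best (N : ℕ) (k z : ℤ) (hk : 1 ≤ k) (hk' : k < (cf.q (N+1) : ℤ)) :
    cf.l N ≤ |(k : ℝ) * θ - z| := by
  set qN : ℤ := (cf.q N : ℤ) with hqNdef
  set qM : ℤ := (cf.q (N+1) : ℤ) with hqMdef
  set pN : ℤ := (cf.p N : ℤ) with hpNdef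
  set pM : ℤ := (cf.p (N+1) : ℤ) with hpMdef
  have hqN : 1 ≤ qN := by rw [hqNdef]; exact_mod_cast q_pos cf N
  have hqM : 1 ≤ qM := by rw [hqMdef]; exact_mod_cast q_pos cf (N+1)
  have hsq : ((-1:ℤ)^N) * ((-1:ℤ)^N) = 1 := by
    rw [← pow_add]; exact Even.neg_one_pow ⟨N, by ring⟩
  obtain ⟨ε, hdet, hε2, hεval⟩ :
      ∃ ε : ℤ, pM * qN - pN * qM = ε ∧ ε * ε = 1 ∧ ε = (-1)^N :=
    ⟨(-1)^N, det cf N, hsq, rfl⟩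
  set x : ℤ := ε * (k * pM - z * qM) with hx
  set y : ℤ := ε * (z * qN - k * pN) with hy
  have h1 : x * qN + y * qM = k := by
    rw [hx, hy]; linear_combination k * ε * hdet + k * hε2
  have h2 : x * pN + y * pM = z := by
    rw [hx, hy]; linear_combination z * ε * hdet + z * hε2
  have hsub : (k : ℝ) * θ - z = x * ((qN : ℝ) * θ - pN) + y * ((qM : ℝ) * θ - pM) := by
    have e1 := congrArg (fun t : ℤ => (t : ℝ)) h1
    have e2 := congrArg (fun t : ℤ => (t : ℝ)) h2
    push_cast at e1 e2
    linear_combination e2 - θ * e1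
  have hdN : ((qN : ℝ) * θ - pN) = (-1)^N * cf.l N := qtheta_sub cf N
  have hdM : ((qM : ℝ) * θ - pM) = (-1)^(N+1) * cf.l (N+1) := qtheta_sub cf (N+1)
  have hlN := l_pos cf N
  have hlM := l_pos cf (N+1)
  have habs : ∀ w : ℤ, w ≠ 0 → cf.l N ≤ |(w : ℝ) * ((qN : ℝ) * θ - pN)| := by
    intro w hw
    rw [abs_mul, hdN, abs_mul, abs_pow, abs_neg, abs_one, one_pow, one_mul,
      abs_of_pos hlN]
    have : (1:ℝ) ≤ |(w : ℝ)| := by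
      rw [← Int.cast_abs]; exact_mod_cast Int.one_le_abs hw
    nlinarith
  rcases eq_or_ne y 0 with hy0 | hy0
  · -- y = 0
    have hx0 : x ≠ 0 := by
      intro h; rw [h, hy0] at h1; simp at h1; omega
    rw [hsub, hy0]
    simpa using habs x hx0
  rcases eq_or_ne x 0 with hx0 | hx0
  · exfalso
    rw [hx0, zero_mul, zero_add] at h1
    rcases lt_trichotomy y 0 with h|h|h
    · nlinarith
    · omega
    · nlinarith
  -- both nonzero
  have hprod : x * y < 0 := by
    rcases lt_trichotomy x 0 with h|h|h
    · rcases lt_trichotomy y 0 with h'|h'|h'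
      · exfalso; nlinarith
      · omega
      · nlinarith
    · omega
    · rcases lt_trichotomy y 0 with h'|h'|h'
      · nlinarith
      · omega
      · exfalso; nlinarith
  have hxy : ((x : ℝ) * y) < 0 := by exact_mod_cast hprod
  have hs2 : ((-1:ℝ)^N) * ((-1:ℝ)^N) = 1 := by
    rw [← pow_add]; exact Even.neg_one_pow ⟨N, by ring⟩
  have hkey : ((x:ℝ) * ((-1:ℝ)^N * cf.l N)) * ((y:ℝ) * ((-1:ℝ)^(N+1) * cf.l (N+1)))
      = -(((x:ℝ) * y) * (cf.l N * cf.l (N+1))) := by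
    rw [pow_succ]
    linear_combination (-((x:ℝ) * y * cf.l N * cf.l (N+1))) * hs2
  have hsame : (0:ℝ) ≤ ((x : ℝ) * ((qN : ℝ) * θ - pN)) * ((y : ℝ) * ((qM : ℝ) * θ - pM)) := by
    rw [hdN, hdM, hkey]
    have := mul_pos (neg_pos.2 hxy) (mul_pos hlN hlM)
    linarith
  rw [hsub]
  exact (habs x hx0).trans (abs_le_abs_add_of_mul_nonneg _ _ hsame)

lemma l_ratio {β : ℕ} (hb : ∀ i, 1 ≤ i → cf.a i ≤ β) (n : ℕ) :
    cf.l n ≤ ((β:ℝ)+1) * cf.l (n+1) := by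
  have h := cf.t_succ (n+1)
  have hinv : (cf.t (n+1))⁻¹ = (cf.a (n+2) : ℝ) + cf.t (n+2) := by rw [h]; ring
  have hbound : (cf.t (n+1))⁻¹ ≤ (β:ℝ) + 1 := by
    rw [hinv]
    have h1 : (cf.a (n+2) : ℝ) ≤ β := by exact_mod_cast hb (n+2) (by omega)
    have h2 := t_lt_one cf (n+2)
    linarith
  have ht := t_pos cf (n+1)
  have hls := l_succ cf n
  have hl : cf.l n = cf.l (n+1) * (cf.t (n+1))⁻¹ := by
    field_simp
    linarith [hls]
  rw [hl]
  have := (l_pos cf (n+1)).le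
  nlinarith

lemma l_pow {β : ℕ} (hb : ∀ i, 1 ≤ i → cf.a i ≤ β) (n m : ℕ) :
    cf.l n ≤ ((β:ℝ)+1)^m * cf.l (n+m) := by
  induction m with
  | zero => simp
  | succ m ih =>
    calc cf.l n ≤ ((β:ℝ)+1)^m * cf.l (n+m) := ih
      _ ≤ ((β:ℝ)+1)^m * (((β:ℝ)+1) * cf.l (n+m+1)) := by
          have := l_ratio cf hb (n+m)
          have hp : (0:ℝ) ≤ ((β:ℝ)+1)^m := by positivity
          nlinarith
      _ = ((β:ℝ)+1)^(m+1) * cf.l (n+(m+1)) := by rw [pow_succ]; ring_nf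

lemma l_key {β : ℕ} (hb : ∀ i, 1 ≤ i → cf.a i ≤ β) (n m N' : ℕ) (hN : N' + 1 = n + m) :
    cf.l n ≤ ((β:ℝ)+1)^m * cf.l N' := by
  cases m with
  | zero =>
    have : n = N' + 1 := by omega
    subst this
    simpa using l_anti cf N'
  | succ m =>
    have hN' : N' = n + m := by omega
    calc cf.l n ≤ ((β:ℝ)+1)^m * cf.l (n+m) := l_pow cf hb n m
      _ ≤ ((β:ℝ)+1)^(m+1) * cf.l N' := by
          rw [hN', pow_succ]
          have h1 : (0:ℝ) < cf.l (n+m) := l_pos cf (n+m)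
          have hp : (0:ℝ) < ((β:ℝ)+1)^m := by positivity
          have hβ0 : (0:ℝ) ≤ (β:ℝ) := Nat.cast_nonneg β
          nlinarith [mul_nonneg hβ0 (mul_pos hp h1).le]

end CFData

lemma abs_sub_lt_one_of_floor_eq (x y : ℝ) (h : ⌊x⌋ = ⌊y⌋) : |x - y| < 1 := by
  rw [abs_sub_lt_iff]
  constructor
  · have h1 := Int.lt_floor_add_one x
    have h2 := Int.floor_le y
    rw [h] at h1
    linarith
  · have h1 := Int.lt_floor_add_one y
    have h2 := Int.floor_le x
    rw [h] at h2
    linarith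

/-- **Counting backward orbit points in an arc.** Fix `β ≥ 1`. There is a constant `C > 1`
depending only on `β` such that for every irrational `θ` of bounded type with all partial
quotients at most `β`, every `v, w ∈ ℝ/ℤ`, all `n, m`, every `λ ≥ 1` and the arc
`J` of length `λ · l n` starting at `w`, the set
`O = { y ∈ J : y = v - i θ for some 0 ≤ i ≤ q (n+m) - 1 }` has at most `λ C^m + 1` elements. -/
theorem backward_orbit_count (β : ℕ) (hβ : 1 ≤ β) :
    ∃ C : ℝ, 1 < C ∧
      ∀ (θ : ℝ), Irrational θ → ∀ (cf : CFData θ), (∀ i, 1 ≤ i → cf.a i ≤ β) →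
        ∀ (v w : AddCircle (1 : ℝ)) (n m : ℕ) (lam : ℝ), 1 ≤ lam →
          ∀ J O : Set (AddCircle (1 : ℝ)),
            J = (fun u : ℝ => w + (u : AddCircle (1 : ℝ))) '' Set.Icc 0 (lam * cf.l n) →
            O = {y | y ∈ J ∧ ∃ i < cf.q (n + m),
                  y = v - (((i : ℝ) * θ : ℝ) : AddCircle (1 : ℝ))} →
            (O.ncard : ℝ) ≤ lam * C ^ m + 1 := by
  have hβR : (1:ℝ) ≤ (β:ℝ) := by exact_mod_cast hβ
  refine ⟨(β:ℝ) + 1, by linarith, ?_⟩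
  intro θ hθ cf hb v w n m lam hlam J O hJ hO
  classical
  have hCm : (0:ℝ) < ((β:ℝ)+1)^m := by positivity
  set L : ℝ := lam * cf.l n with hLdef
  have hlampos : (0:ℝ) < lam := by linarith
  have hL0 : (0:ℝ) ≤ L := mul_nonneg hlampos.le (CFData.l_pos cf n).le
  set f : ℕ → AddCircle (1:ℝ) := fun i => v - (((i:ℝ) * θ : ℝ) : AddCircle (1:ℝ)) with hf
  set I : Finset ℕ := (Finset.range (cf.q (n+m))).filter (fun i => f i ∈ J) with hI
  have hOsub : O ⊆ f '' (I : Set ℕ) := by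
    rw [hO]
    rintro y ⟨hyJ, i, hi, hy⟩
    refine ⟨i, ?_, hy.symm⟩
    simp only [hI, Finset.coe_filter, Finset.mem_range, Set.mem_setOf_eq]
    refine ⟨hi, ?_⟩
    show v - (((i:ℝ) * θ : ℝ) : AddCircle (1:ℝ)) ∈ J
    rw [← hy]; exact hyJ
  have hOcard : (O.ncard : ℝ) ≤ (I.card : ℝ) := by
    have h1 : O.ncard ≤ (f '' (I : Set ℕ)).ncard :=
      Set.ncard_le_ncard hOsub (I.finite_toSet.image f)
    have h2 : (f '' (I : Set ℕ)).ncard ≤ (I : Set ℕ).ncard :=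
      Set.ncard_image_le I.finite_toSet
    have h3 : (I : Set ℕ).ncard = I.card := Set.ncard_coe_finset I
    have := (h1.trans h2).trans_eq h3
    exact_mod_cast this
  cases hnm : n + m with
  | zero =>
    have hq : cf.q (n+m) = 1 := by rw [hnm, cf.q_zero]
    have hcard : I.card ≤ 1 := by
      calc I.card ≤ (Finset.range (cf.q (n+m))).card := Finset.card_filter_le _ _
        _ = 1 := by rw [Finset.card_range, hq]
    have : (I.card : ℝ) ≤ 1 := by exact_mod_cast hcard
    nlinarith
  | succ N' =>
    set s : ℝ := cf.l N' with hs
    have hspos : 0 < s := CFData.l_pos cf N'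
    have hmem : ∀ i ∈ I, ∃ u : ℝ, u ∈ Set.Icc 0 L ∧ w + (u : AddCircle (1:ℝ)) = f i := by
      intro i hi
      rw [hI, Finset.mem_filter] at hi
      have h2 := hi.2
      rw [hJ] at h2
      obtain ⟨u, hu, hu2⟩ := h2
      exact ⟨u, hu, hu2⟩
    choose! u hu1 hu2 using hmem
    set g : ℕ → ℤ := fun i => ⌊u i / s⌋ with hg
    have hsep : ∀ i ∈ I, ∀ j ∈ I, i < j → s ≤ |u i - u j| := by
      intro i hi j hj hij
      have e1 := hu2 i hi
      have e2 := hu2 j hj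
      have hrange : j < cf.q (n+m) := by
        rw [hI, Finset.mem_filter, Finset.mem_range] at hj; exact hj.1
      have ecirc : ((u i - u j : ℝ) : AddCircle (1:ℝ))
          = (((j:ℝ)*θ - (i:ℝ)*θ : ℝ) : AddCircle (1:ℝ)) := by
        rw [QuotientAddGroup.mk_sub, QuotientAddGroup.mk_sub]
        have : (↑(u i) : AddCircle (1:ℝ)) - ↑(u j) = f i - f j := by
          rw [← e1, ← e2]; abel
        rw [this]
        simp only [hf]
        abel
      obtain ⟨z, hz⟩ := AddSubgroup.mem_zmultiples_iff.1
        ((QuotientAddGroup.eq_iff_sub_mem).1 ecirc)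
      have hz' : (z : ℝ) = (u i - u j) - ((j:ℝ)*θ - (i:ℝ)*θ) := by
        rw [← hz]; simp
      have hk1 : (1:ℤ) ≤ (j:ℤ) - i := by omega
      have hk2 : (j:ℤ) - i < (cf.q (N'+1) : ℤ) := by
        rw [← hnm]; omega
      have hbest := CFData.best cf N' ((j:ℤ) - i) (-z) hk1 hk2
      have heq : |(((j:ℤ) - i : ℤ) : ℝ) * θ - ((-z : ℤ) : ℝ)| = |u i - u j| := by
        congr 1
        push_cast
        linarith [hz']
      rw [heq] at hbest
      exact hbest
    have hinj : Set.InjOn g (I : Set ℕ) := by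
      intro i hi j hj hgij
      by_contra hne
      have key : ∀ i ∈ I, ∀ j ∈ I, i < j → g i = g j → False := by
        intro i hi j hj hij hg
        have h1 := hsep i hi j hj hij
        have h2 : |u i / s - u j / s| < 1 := abs_sub_lt_one_of_floor_eq _ _ hg
        rw [← sub_div, abs_div, abs_of_pos hspos, div_lt_one hspos] at h2
        linarith
      rcases lt_trichotomy i j with h|h|h
      · exact key i hi j hj h hgij
      · exact hne h
      · exact key j hj i hi h hgij.symm
    have hmaps : ∀ i ∈ (I : Set ℕ), g i ∈ (Finset.Icc (0:ℤ) ⌊L / s⌋ : Set ℤ) := by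
      intro i hi
      simp only [Finset.coe_Icc, Set.mem_Icc]
      constructor
      · exact Int.floor_nonneg.2 (div_nonneg (hu1 i hi).1 hspos.le)
      · exact Int.floor_le_floor (by gcongr; exact (hu1 i hi).2)
    have hcard : I.card ≤ (Finset.Icc (0:ℤ) ⌊L / s⌋).card :=
      Finset.card_le_card_of_injOn g (fun i hi => by exact_mod_cast hmaps i hi) hinj
    have hfloor0 : (0:ℤ) ≤ ⌊L / s⌋ := Int.floor_nonneg.2 (div_nonneg hL0 hspos.le)
    have hcard2 : ((Finset.Icc (0:ℤ) ⌊L / s⌋).card : ℝ) ≤ L / s + 1 := by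
      rw [Int.card_Icc]
      have h1 : ((⌊L / s⌋ + 1 - 0).toNat : ℤ) = ⌊L / s⌋ + 1 := by omega
      have h2 : ((⌊L / s⌋ + 1 - 0).toNat : ℝ) = ((⌊L / s⌋ : ℝ) + 1) := by
        exact_mod_cast congrArg (fun t : ℤ => (t : ℝ)) h1
      rw [h2]
      have := Int.floor_le (L / s)
      linarith
    have hratio : L / s ≤ lam * ((β:ℝ)+1)^m := by
      rw [div_le_iff₀ hspos]
      have hkey := CFData.l_key cf hb n m N' hnm.symm
      calc L = lam * cf.l n := hLdef
        _ ≤ lam * (((β:ℝ)+1)^m * cf.l N') := by nlinarith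
        _ = lam * ((β:ℝ)+1)^m * s := by rw [hs]; ring
    have : (I.card : ℝ) ≤ lam * ((β:ℝ)+1)^m + 1 := by
      calc (I.card : ℝ) ≤ ((Finset.Icc (0:ℤ) ⌊L / s⌋).card : ℝ) := by exact_mod_cast hcard
        _ ≤ L / s + 1 := hcard2
        _ ≤ lam * ((β:ℝ)+1)^m + 1 := by linarith
    linarith
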